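/- Let C ⊂ S^d be a spherical convex body with Δ(C) > π/2 and let L ⊃ C be a lune with Δ(L) = Δ(C). Then the centers of the two (d−1)-dimensional hemispheres bounding L belong to the boundary of C and both are smooth points of the boundary of C. -/

import Mathlib

noncomputable section

/-- Euclidean space ℝⁿ. -/
abbrev Esp (n : ℕ) := EuclideanSpace ℝ (Fin n)

/-- The unit sphere in ℝⁿ. -/
def uSphere (n : ℕ) : Set (Esp n) := {x | ‖x‖ = 1}

/-- Geodesic (angular) distance between unit vectors. -/
def sdist {n : ℕ} (a b : Esp n) : ℝ := Real.arccos (inner ℝ a b : ℝ)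

/-- Closed hemisphere with center `m`. -/
def Hemi {n : ℕ} (m : Esp n) : Set (Esp n) := {x ∈ uSphere n | 0 ≤ (inner ℝ m x : ℝ)}

/-- The great sphere (great circle for n = 3) bounding the hemisphere centered at `m`. -/
def gSphere {n : ℕ} (m : Esp n) : Set (Esp n) := {x ∈ uSphere n | (inner ℝ m x : ℝ) = 0}

/-- The shorter great-circle arc between `a` and `b`: points through which a
minimizing geodesic from `a` to `b` passes. -/
def Arc {n : ℕ} (a b : Esp n) : Set (Esp n) :=
  {x ∈ uSphere n | sdist a x + sdist x b = sdist a b}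

/-- Spherically convex set: contained in the sphere, no antipodal pairs, and
closed under taking shorter arcs. -/
def SphConvex {n : ℕ} (C : Set (Esp n)) : Prop :=
  C ⊆ uSphere n ∧ (∀ x ∈ C, -x ∉ C) ∧ ∀ a ∈ C, ∀ b ∈ C, Arc a b ⊆ C

/-- Interior of a subset of the sphere relative to the sphere. -/
def sphInterior {n : ℕ} (C : Set (Esp n)) : Set (Esp n) :=
  {x ∈ uSphere n | ∃ ε > 0, ∀ y ∈ uSphere n, dist y x < ε → y ∈ C}

/-- Spherical convex body: closed, spherically convex, with nonempty interior
relative to the sphere. -/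
def SphBody {n : ℕ} (C : Set (Esp n)) : Prop :=
  SphConvex C ∧ IsClosed C ∧ (sphInterior C).Nonempty

/-- Boundary of a closed subset of the sphere relative to the sphere. -/
def sphBoundary {n : ℕ} (C : Set (Esp n)) : Set (Esp n) := C \ sphInterior C

/-- `g`, `h` are centers of two distinct non-opposite hemispheres. -/
def IsLune {n : ℕ} (g h : Esp n) : Prop :=
  g ∈ uSphere n ∧ h ∈ uSphere n ∧ g ≠ h ∧ g ≠ -h

/-- The lune determined by hemisphere centers `g` and `h`. -/
def Lune {n : ℕ} (g h : Esp n) : Set (Esp n) := Hemi g ∩ Hemi h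

/-- The (d-1)-dimensional hemisphere `G/H` bounding the lune `G ∩ H`:
part of the great sphere of `G` lying in `H`.  (A semicircle when n = 3.) -/
def semic {n : ℕ} (g h : Esp n) : Set (Esp n) :=
  {x ∈ uSphere n | (inner ℝ g x : ℝ) = 0 ∧ 0 ≤ (inner ℝ h x : ℝ)}

/-- The center of the bounding hemisphere `G/H` of the lune `G ∩ H`:
the normalized projection of `h` onto the hyperplane orthogonal to `g`. -/
def scCenter {n : ℕ} (g h : Esp n) : Esp n :=
  ‖h - (inner ℝ g h : ℝ) • g‖⁻¹ • (h - (inner ℝ g h : ℝ) • g)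

/-- Thickness of a lune: distance between the centers of its two bounding
hemispheres. -/
def lthick {n : ℕ} (g h : Esp n) : ℝ := sdist (scCenter g h) (scCenter h g)

/-- Thickness of a convex body: minimal thickness of a lune containing it. -/
def thick {n : ℕ} (C : Set (Esp n)) : ℝ :=
  sInf {t | ∃ g h, IsLune g h ∧ C ⊆ Lune g h ∧ lthick g h = t}

/-- Reduced spherical body. -/
def Reduced {n : ℕ} (R : Set (Esp n)) : Prop :=
  SphBody R ∧ ∀ Z, SphBody Z → Z ⊆ R → Z ≠ R → thick Z < thick R

/-- Geodesic diameter of a set on the sphere. -/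
def sdiam {n : ℕ} (C : Set (Esp n)) : ℝ :=
  sSup {t | ∃ a ∈ C, ∃ b ∈ C, sdist a b = t}

/-- The hemisphere centered at `m` supports `C` at `p`. -/
def SupportsAt {n : ℕ} (C : Set (Esp n)) (m p : Esp n) : Prop :=
  m ∈ uSphere n ∧ C ⊆ Hemi m ∧ p ∈ C ∧ (inner ℝ m p : ℝ) = 0

/-- The hemisphere centered at `m` supports `C`. -/
def Supports {n : ℕ} (C : Set (Esp n)) (m : Esp n) : Prop := ∃ p, SupportsAt C m p

/-- The width of `C` determined by the supporting hemisphere centered at `m`: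
minimal thickness of a lune `M ∩ M*` over supporting hemispheres `M*` of `C`. -/
def sWidth {n : ℕ} (C : Set (Esp n)) (m : Esp n) : ℝ :=
  sInf {t | ∃ h, Supports C h ∧ IsLune m h ∧ C ⊆ Lune m h ∧ lthick m h = t}

/-- `C` is of constant width `w`. -/
def ConstWidth {n : ℕ} (C : Set (Esp n)) (w : ℝ) : Prop :=
  ∀ m, Supports C m → sWidth C m = w

/-- Extreme point of a spherically convex set. -/
def ExtremeP {n : ℕ} (C : Set (Esp n)) (e : Esp n) : Prop :=
  e ∈ C ∧ ∀ a ∈ C, ∀ b ∈ C, e ∈ Arc a b → e = a ∨ e = b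

/-- `p` is a smooth boundary point: exactly one hemisphere supports `C` at `p`. -/
def SmoothPoint {n : ℕ} (C : Set (Esp n)) (p : Esp n) : Prop :=
  ∃! m, SupportsAt C m p

/-- Strict convexity: the boundary contains no nondegenerate great-circle arc. -/
def StrictlyConvexS {n : ℕ} (C : Set (Esp n)) : Prop :=
  ∀ a ∈ sphBoundary C, ∀ b ∈ sphBoundary C, Arc a b ⊆ sphBoundary C → a = b

end

section Aux

open Real Set Filter
open scoped RealInnerProductSpace Topology

variable {n : ℕ}

private lemma norm_eq_one_of_sq {y : Esp n} (h : ‖y‖ ^ 2 = 1) : ‖y‖ = 1 := by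
  have h1 := Real.sqrt_sq (norm_nonneg y)
  rw [h, Real.sqrt_one] at h1
  exact h1.symm

private lemma norm_le_of_sq_le {y : Esp n} {a : ℝ} (ha : 0 ≤ a) (h : ‖y‖ ^ 2 ≤ a ^ 2) :
    ‖y‖ ≤ a := by
  nlinarith [norm_nonneg y]

private lemma inner_lt_one_of_ne {x y : Esp n} (hx : ‖x‖ = 1) (hy : ‖y‖ = 1) (hne : x ≠ y) :
    ⟪x, y⟫ < 1 := by
  refine lt_of_le_of_ne ?_ fun e => hne ((inner_eq_one_iff_of_norm_eq_one hx hy).1 e)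
  simpa [hx, hy] using real_inner_le_norm x y

private lemma neg_one_lt_inner {x y : Esp n} (hx : ‖x‖ = 1) (hy : ‖y‖ = 1) (hne : x ≠ -y) :
    -1 < ⟪x, y⟫ := by
  have h := inner_lt_one_of_ne hx (by simpa using hy) hne
  rw [inner_neg_right] at h
  linarith

private lemma arccos_anti {x y : ℝ} (h : x ≤ y) : Real.arccos y ≤ Real.arccos x := by
  simp only [Real.arccos]
  have := Real.monotone_arcsin h
  linarith

private lemma arccos_strict_anti {x y : ℝ} (hx : -1 ≤ x) (h : x < y) (hy : y ≤ 1) :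
    Real.arccos y < Real.arccos x :=
  Real.strictAntiOn_arccos ⟨hx, le_trans h.le hy⟩ ⟨le_trans hx h.le, hy⟩ h

private lemma exists_near {p w : Esp n} (hp : ‖p‖ = 1) (hw : ‖w‖ = 1)
    (hpw : ⟪w, p⟫ = 0) {ε : ℝ} (hε : 0 < ε) :
    ∃ y : Esp n, ‖y‖ = 1 ∧ dist y p < ε ∧ 0 < ⟪w, y⟫ := by
  set δ := min ε 2 / 2 with hδdef
  have hδ0 : 0 < δ := by positivity
  have hδε : δ < ε := by
    have h1 : min ε 2 ≤ ε := min_le_left _ _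
    have : δ ≤ ε / 2 := by rw [hδdef]; linarith
    linarith
  have hδπ : δ < π := by
    have h2 : min ε 2 ≤ 2 := min_le_right _ _
    have : δ ≤ 1 := by rw [hδdef]; linarith
    have := Real.pi_gt_three
    linarith
  have hpw' : ⟪p, w⟫ = (0:ℝ) := by rw [real_inner_comm]; exact hpw
  refine ⟨Real.cos δ • p + Real.sin δ • w, ?_, ?_, ?_⟩
  · apply norm_eq_one_of_sq
    rw [norm_add_sq_real]
    simp only [norm_smul, Real.norm_eq_abs, real_inner_smul_left, real_inner_smul_right,
      real_inner_comm p w, hpw, hpw']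
    rw [mul_pow, mul_pow, sq_abs, sq_abs, hp, hw]
    have := Real.sin_sq_add_cos_sq δ
    nlinarith
  · rw [dist_eq_norm]
    have hle : ‖Real.cos δ • p + Real.sin δ • w - p‖ ≤ δ := by
      apply norm_le_of_sq_le hδ0.le
      rw [norm_sub_sq_real, norm_add_sq_real]
      simp only [norm_smul, Real.norm_eq_abs, real_inner_smul_left, real_inner_smul_right,
        inner_add_left, real_inner_comm p w, hpw, hpw', real_inner_self_eq_norm_sq]
      rw [mul_pow, mul_pow, sq_abs, sq_abs, hp, hw]
      have h1 := Real.sin_sq_add_cos_sq δ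
      have h2 : 1 - δ ^ 2 / 2 ≤ Real.cos δ := Real.one_sub_sq_div_two_le_cos
      nlinarith
    linarith
  · rw [inner_add_right, real_inner_smul_right, real_inner_smul_right, hpw,
      real_inner_self_eq_norm_sq, hw]
    have := Real.sin_pos_of_pos_of_lt_pi hδ0 hδπ
    nlinarith

private lemma arccos_sum {α β γ N : ℝ} (hα : 0 < α) (hβ : 0 < β) (hγ1 : γ ≤ 1) (hγ2 : -1 ≤ γ)
    (hN : 0 < N) (hN2 : N ^ 2 = α ^ 2 + 2 * (α * β) * γ + β ^ 2) :
    Real.arccos ((α + β * γ) / N) + Real.arccos ((α * γ + β) / N) = Real.arccos γ := by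
  set A := (α + β * γ) / N with hA
  set B := (α * γ + β) / N with hB
  have hγsq : 0 ≤ 1 - γ ^ 2 := by nlinarith
  set σ := Real.sqrt (1 - γ ^ 2) with hσ
  have hσ2 : σ ^ 2 = 1 - γ ^ 2 := Real.sq_sqrt hγsq
  have hσ0 : 0 ≤ σ := Real.sqrt_nonneg _
  have hNne : N ≠ 0 := ne_of_gt hN
  have hA2 : 1 - A ^ 2 = (β * σ / N) ^ 2 := by
    rw [hA]
    field_simp
    linear_combination hN2 - β ^ 2 * hσ2
  have hB2 : 1 - B ^ 2 = (α * σ / N) ^ 2 := by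
    rw [hB]
    field_simp
    linear_combination hN2 - α ^ 2 * hσ2
  have hA1 : A ≤ 1 := by nlinarith [sq_nonneg (β * σ / N)]
  have hAm : -1 ≤ A := by nlinarith [sq_nonneg (β * σ / N)]
  have hB1 : B ≤ 1 := by nlinarith [sq_nonneg (α * σ / N)]
  have hBm : -1 ≤ B := by nlinarith [sq_nonneg (α * σ / N)]
  have hsqrtA : Real.sqrt (1 - A ^ 2) = β * σ / N := by
    rw [hA2, Real.sqrt_sq (by positivity)]
  have hsqrtB : Real.sqrt (1 - B ^ 2) = α * σ / N := by
    rw [hB2, Real.sqrt_sq (by positivity)]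
  have hsum0 : 0 ≤ Real.arccos A + Real.arccos B :=
    add_nonneg (Real.arccos_nonneg _) (Real.arccos_nonneg _)
  have hsumπ : Real.arccos A + Real.arccos B ≤ π := by
    have hAB : -B ≤ A := by
      have hABsum : 0 ≤ A + B := by
        rw [hA, hB, ← add_div]
        apply div_nonneg _ hN.le
        nlinarith
      linarith
    have h3 : Real.arccos A ≤ Real.arccos (-B) := arccos_anti hAB
    rw [Real.arccos_neg] at h3
    linarith
  have hcos : Real.cos (Real.arccos A + Real.arccos B) = γ := by
    rw [Real.cos_add, Real.cos_arccos hAm hA1, Real.cos_arccos hBm hB1,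
      Real.sin_arccos, Real.sin_arccos, hsqrtA, hsqrtB, hA, hB]
    field_simp
    have hNN : N * N = N ^ 2 := by ring
    linear_combination γ * hNN - γ * hN2 - α * β * hσ2
  rw [← hcos, Real.arccos_cos hsum0 hsumπ]

private lemma normalized_mem_arc {x y : Esp n} (hx : ‖x‖ = 1) (hy : ‖y‖ = 1) (hne : x ≠ -y)
    {α β : ℝ} (hα : 0 < α) (hβ : 0 < β) :
    α • x + β • y ≠ 0 ∧ ‖α • x + β • y‖⁻¹ • (α • x + β • y) ∈ Arc x y := by
  have hγ1 : ⟪x, y⟫ ≤ 1 := by simpa [hx, hy] using real_inner_le_norm x y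
  have hγ2 : -1 < ⟪x, y⟫ := neg_one_lt_inner hx hy hne
  have hN2 : ‖α • x + β • y‖ ^ 2 = α ^ 2 + 2 * (α * β) * ⟪x, y⟫ + β ^ 2 := by
    rw [norm_add_sq_real]
    simp only [norm_smul, Real.norm_eq_abs, real_inner_smul_left, real_inner_smul_right]
    rw [mul_pow, mul_pow, sq_abs, sq_abs, hx, hy]
    ring
  have hN2pos : 0 < ‖α • x + β • y‖ ^ 2 := by
    rw [hN2]
    nlinarith [sq_nonneg (α - β), mul_pos (mul_pos hα hβ) (show (0:ℝ) < 1 + ⟪x, y⟫ by linarith)]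
  have hz : α • x + β • y ≠ 0 := by
    intro h0
    rw [h0] at hN2pos
    simp at hN2pos
  have hN : 0 < ‖α • x + β • y‖ := norm_pos_iff.2 hz
  refine ⟨hz, ?_⟩
  have hzn : ‖‖α • x + β • y‖⁻¹ • (α • x + β • y)‖ = 1 := by
    rw [norm_smul, Real.norm_eq_abs, abs_of_nonneg (inv_nonneg.2 hN.le),
      inv_mul_cancel₀ (ne_of_gt hN)]
  have hA : ⟪x, ‖α • x + β • y‖⁻¹ • (α • x + β • y)⟫ = (α + β * ⟪x, y⟫) / ‖α • x + β • y‖ := by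
    rw [real_inner_smul_right, inner_add_right, real_inner_smul_right, real_inner_smul_right,
      real_inner_self_eq_norm_sq, hx]
    field_simp
  have hB : ⟪‖α • x + β • y‖⁻¹ • (α • x + β • y), y⟫
      = (α * ⟪x, y⟫ + β) / ‖α • x + β • y‖ := by
    rw [real_inner_smul_left, inner_add_left, real_inner_smul_left, real_inner_smul_left,
      real_inner_self_eq_norm_sq, hy]
    field_simp
  refine ⟨hzn, ?_⟩
  show Real.arccos _ + Real.arccos _ = Real.arccos _
  rw [hA, hB]
  exact arccos_sum hα hβ hγ1 hγ2.le hN hN2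

private lemma scCenter_spec {g h : Esp n} (hg : ‖g‖ = 1) (hh : ‖h‖ = 1)
    (h1 : g ≠ h) (h2 : g ≠ -h) :
    ‖scCenter g h‖ = 1 ∧ ⟪g, scCenter g h⟫ = 0 ∧
      ⟪h, scCenter g h⟫ = Real.sqrt (1 - ⟪g, h⟫ ^ 2) ∧
      h = ⟪g, h⟫ • g + Real.sqrt (1 - ⟪g, h⟫ ^ 2) • scCenter g h := by
  have hgh : ⟪h, g⟫ = ⟪g, h⟫ := real_inner_comm g h
  have ht1 : ⟪g, h⟫ < 1 := inner_lt_one_of_ne hg hh h1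
  have ht2 : -1 < ⟪g, h⟫ := neg_one_lt_inner hg hh h2
  have hs2 : 0 < 1 - ⟪g, h⟫ ^ 2 := by nlinarith
  have hnorm : ‖h - ⟪g, h⟫ • g‖ = Real.sqrt (1 - ⟪g, h⟫ ^ 2) := by
    rw [← Real.sqrt_sq (norm_nonneg (h - ⟪g, h⟫ • g))]
    congr 1
    rw [norm_sub_sq_real]
    simp only [norm_smul, Real.norm_eq_abs, real_inner_smul_right, hgh]
    rw [mul_pow, sq_abs, hg, hh]
    ring
  have hs : 0 < Real.sqrt (1 - ⟪g, h⟫ ^ 2) := Real.sqrt_pos.2 hs2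
  have hss : Real.sqrt (1 - ⟪g, h⟫ ^ 2) ^ 2 = 1 - ⟪g, h⟫ ^ 2 := Real.sq_sqrt hs2.le
  have hc : scCenter g h = (Real.sqrt (1 - ⟪g, h⟫ ^ 2))⁻¹ • (h - ⟪g, h⟫ • g) := by
    rw [scCenter, hnorm]
  refine ⟨?_, ?_, ?_, ?_⟩
  · rw [hc, norm_smul, Real.norm_eq_abs, abs_of_nonneg (inv_nonneg.2 hs.le), hnorm,
      inv_mul_cancel₀ (ne_of_gt hs)]
  · rw [hc, real_inner_smul_right, inner_sub_right, real_inner_smul_right,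
      real_inner_self_eq_norm_sq, hg]
    simp
  · rw [hc, real_inner_smul_right, inner_sub_right, real_inner_smul_right,
      real_inner_self_eq_norm_sq, hh, hgh]
    rw [inv_mul_eq_div, div_eq_iff (ne_of_gt hs)]
    linear_combination -hss
  · rw [hc, smul_smul, mul_inv_cancel₀ (ne_of_gt hs), one_smul]
    abel

private lemma lthick_eq {g h : Esp n} (hg : ‖g‖ = 1) (hh : ‖h‖ = 1)
    (h1 : g ≠ h) (h2 : g ≠ -h) :
    lthick g h = Real.arccos (-⟪g, h⟫) := by
  have h1' : h ≠ g := h1.symm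
  have h2' : h ≠ -g := by
    intro e
    apply h2
    rw [e, neg_neg]
  have hgh : ⟪h, g⟫ = ⟪g, h⟫ := real_inner_comm g h
  have ht1 : ⟪g, h⟫ < 1 := inner_lt_one_of_ne hg hh h1
  have ht2 : -1 < ⟪g, h⟫ := neg_one_lt_inner hg hh h2
  have hs2 : 0 < 1 - ⟪g, h⟫ ^ 2 := by nlinarith
  have hs : 0 < Real.sqrt (1 - ⟪g, h⟫ ^ 2) := Real.sqrt_pos.2 hs2
  have hss : Real.sqrt (1 - ⟪g, h⟫ ^ 2) ^ 2 = 1 - ⟪g, h⟫ ^ 2 := Real.sq_sqrt hs2.le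
  have hnorm : ‖h - ⟪g, h⟫ • g‖ = Real.sqrt (1 - ⟪g, h⟫ ^ 2) := by
    rw [← Real.sqrt_sq (norm_nonneg (h - ⟪g, h⟫ • g))]
    congr 1
    rw [norm_sub_sq_real]
    simp only [norm_smul, Real.norm_eq_abs, real_inner_smul_right, hgh]
    rw [mul_pow, sq_abs, hg, hh]
    ring
  have hnorm' : ‖g - ⟪g, h⟫ • h‖ = Real.sqrt (1 - ⟪g, h⟫ ^ 2) := by
    rw [← Real.sqrt_sq (norm_nonneg (g - ⟪g, h⟫ • h))]
    congr 1
    rw [norm_sub_sq_real]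
    simp only [norm_smul, Real.norm_eq_abs, real_inner_smul_right]
    rw [mul_pow, sq_abs, hg, hh]
    ring
  have hinner : ⟪h - ⟪g, h⟫ • g, g - ⟪g, h⟫ • h⟫ = -⟪g, h⟫ * (1 - ⟪g, h⟫ ^ 2) := by
    rw [inner_sub_left, inner_sub_right, inner_sub_right, real_inner_smul_left,
      real_inner_smul_left, real_inner_smul_right, real_inner_smul_right,
      real_inner_self_eq_norm_sq, real_inner_self_eq_norm_sq, hg, hh, hgh]
    ring
  have hcc : ⟪scCenter g h, scCenter h g⟫ = -⟪g, h⟫ := by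
    rw [scCenter, scCenter, hgh, hnorm, hnorm']
    rw [real_inner_smul_left, real_inner_smul_right, hinner]
    have key : ∀ a u : ℝ, a ≠ 0 → a ^ 2 = 1 - u ^ 2 →
        a⁻¹ * (a⁻¹ * (-u * (1 - u ^ 2))) = -u := by
      intro a u ha hau
      rw [← hau]
      field_simp
    exact key _ _ (ne_of_gt hs) hss
  have : lthick g h = Real.arccos ⟪scCenter g h, scCenter h g⟫ := rfl
  rw [this, hcc]

private def sphCone (C : Set (Esp n)) : Set (Esp n) := {p | p ≠ 0 ∧ ‖p‖⁻¹ • p ∈ C}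

private lemma sphCone_smul {C : Set (Esp n)} {r : ℝ} (hr : 0 < r) {p : Esp n}
    (hp : p ∈ sphCone C) : r • p ∈ sphCone C := by
  obtain ⟨h0, hpC⟩ := hp
  refine ⟨smul_ne_zero (ne_of_gt hr) h0, ?_⟩
  have hn : ‖p‖ ≠ 0 := norm_ne_zero_iff.2 h0
  have : ‖r • p‖⁻¹ • r • p = ‖p‖⁻¹ • p := by
    rw [norm_smul, Real.norm_eq_abs, abs_of_pos hr, smul_smul]
    congr 1
    field_simp
  rw [this]
  exact hpC

private lemma sphCone_add {C : Set (Esp n)} (hC : SphConvex C) {p q : Esp n}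
    (hp : p ∈ sphCone C) (hq : q ∈ sphCone C) : p + q ∈ sphCone C := by
  obtain ⟨hp0, hpC⟩ := hp
  obtain ⟨hq0, hqC⟩ := hq
  have hpn : ‖p‖ ≠ 0 := norm_ne_zero_iff.2 hp0
  have hqn : ‖q‖ ≠ 0 := norm_ne_zero_iff.2 hq0
  have hxn : ‖‖p‖⁻¹ • p‖ = 1 := by
    rw [norm_smul, Real.norm_eq_abs, abs_of_nonneg (inv_nonneg.2 (norm_nonneg p)),
      inv_mul_cancel₀ hpn]
  have hyn : ‖‖q‖⁻¹ • q‖ = 1 := by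
    rw [norm_smul, Real.norm_eq_abs, abs_of_nonneg (inv_nonneg.2 (norm_nonneg q)),
      inv_mul_cancel₀ hqn]
  have hxy : ‖p‖⁻¹ • p ≠ -(‖q‖⁻¹ • q) := by
    intro e
    have : -(‖p‖⁻¹ • p) ∈ C := by
      rw [e, neg_neg]
      exact hqC
    exact hC.2.1 _ hpC this
  have hpq : p + q = ‖p‖ • ‖p‖⁻¹ • p + ‖q‖ • ‖q‖⁻¹ • q := by
    rw [smul_inv_smul₀ hpn, smul_inv_smul₀ hqn]
  obtain ⟨hne0, hmem⟩ := normalized_mem_arc hxn hyn hxy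
    (show 0 < ‖p‖ from norm_pos_iff.2 hp0) (show 0 < ‖q‖ from norm_pos_iff.2 hq0)
  have harc := hC.2.2 _ hpC _ hqC hmem
  constructor
  · rw [hpq]
    exact hne0
  · rw [hpq]
    exact harc

private lemma thick_le {C : Set (Esp n)} {m h' : Esp n} (hl : IsLune m h')
    (hsub : C ⊆ Lune m h') : thick C ≤ lthick m h' := by
  apply csInf_le
  · refine ⟨0, ?_⟩
    rintro x ⟨a, b, _, _, rfl⟩
    exact Real.arccos_nonneg _
  · exact ⟨m, h', hl, hsub, rfl⟩

private lemma pert_ineq {t s e vg vn ε : ℝ} (ht : 0 < t) (hs : 0 < s) (he : 0 < e)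
    (hvn : 0 ≤ vn) (hε : 0 < ε) (hεle : ε ≤ t * s * e / (1 + (t * vg - s * e) ^ 2)) :
    (t + ε * (t * vg - s * e)) ^ 2 < t ^ 2 * (1 + 2 * ε * vg + ε ^ 2 * vn) := by
  have hQ0 : (0:ℝ) ≤ (t * vg - s * e) ^ 2 := sq_nonneg _
  have h1Q : (0:ℝ) < 1 + (t * vg - s * e) ^ 2 := by linarith
  have htse : 0 < t * s * e := mul_pos (mul_pos ht hs) he
  have hεQ : ε * (t * vg - s * e) ^ 2 < t * s * e := by
    have h1 : ε * (t * vg - s * e) ^ 2 ≤ (t * s * e / (1 + (t * vg - s * e) ^ 2)) *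
        (t * vg - s * e) ^ 2 := mul_le_mul_of_nonneg_right hεle hQ0
    have h2 : (t * s * e / (1 + (t * vg - s * e) ^ 2)) * (t * vg - s * e) ^ 2 < t * s * e := by
      rw [div_mul_eq_mul_div, div_lt_iff₀ h1Q]
      nlinarith
    linarith
  have hprod : ε * (ε * (t * vg - s * e) ^ 2) < ε * (t * s * e) :=
    mul_lt_mul_of_pos_left hεQ hε
  have hZ : 0 ≤ ε ^ 2 * t ^ 2 * vn := by positivity
  have hX : 0 < ε * (t * s * e) := mul_pos hε htse
  nlinarith [hprod, hZ, hX]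

private lemma lt_of_sq_lt_sq' {a b : ℝ} (h : a ^ 2 < b ^ 2) (hb : 0 < b) : a < b := by
  nlinarith

set_option maxHeartbeats 1000000 in
private lemma center_mem {C : Set (Esp n)} (hC : SphBody C) (ht : Real.pi / 2 < thick C)
    {g h : Esp n} (hl : IsLune g h) (hsub : C ⊆ Lune g h) (heq : lthick g h = thick C) :
    scCenter g h ∈ C := by
  obtain ⟨hCconv, hCclosed, hCint⟩ := hC
  have hg : ‖g‖ = 1 := hl.1
  have hh : ‖h‖ = 1 := hl.2.1
  have hgh1 : g ≠ h := hl.2.2.1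
  have hgh2 : g ≠ -h := hl.2.2.2
  obtain ⟨hcn, hgc, hhc, hdecomp⟩ := scCenter_spec hg hh hgh1 hgh2
  have ht1 : ⟪g, h⟫ < 1 := inner_lt_one_of_ne hg hh hgh1
  have ht2 : -1 < ⟪g, h⟫ := neg_one_lt_inner hg hh hgh2
  have hs2 : 0 < 1 - ⟪g, h⟫ ^ 2 := by nlinarith
  set t := (⟪g, h⟫ : ℝ) with htdef
  set s := Real.sqrt (1 - t ^ 2) with hsdef
  set c := scCenter g h with hcdef
  have hs : 0 < s := Real.sqrt_pos.2 hs2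
  have hlth : lthick g h = Real.arccos (-t) := lthick_eq hg hh hgh1 hgh2
  have htpos : 0 < t := by
    by_contra hle
    push_neg at hle
    have h0 : Real.arccos (-t) ≤ Real.arccos 0 := arccos_anti (by linarith)
    rw [Real.arccos_zero] at h0
    rw [heq] at hlth
    linarith
  by_contra hcmem
  obtain ⟨p0, hp0u, ε0, hε0, hball0⟩ := hCint
  have hp0C : p0 ∈ C := hball0 p0 hp0u (by simp [dist_self, hε0])
  set S : ConvexCone ℝ (Esp n) :=
    ⟨sphCone C, fun r hr p hp => sphCone_smul hr hp,
      fun p hp q hq => sphCone_add hCconv hp hq⟩ with hSdef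
  have hmemS : ∀ x ∈ C, x ∈ (S : Set (Esp n)) := by
    intro x hx
    have hxu : ‖x‖ = 1 := hCconv.1 hx
    refine ⟨?_, ?_⟩
    · intro e0
      rw [e0] at hxu
      simp at hxu
    · rw [hxu, inv_one, one_smul]
      exact hx
  have hclosed : IsClosed (S.closure : Set (Esp n)) := isClosed_closure
  have hcnotin : c ∉ S.closure := by
    intro hmem
    rw [ConvexCone.mem_closure] at hmem
    obtain ⟨u, hu, hlim⟩ := mem_closure_iff_seq_limit.1 hmem
    have hcont : ContinuousAt (fun z : Esp n => ‖z‖⁻¹ • z) c := by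
      apply ContinuousAt.fun_smul
      · exact continuous_norm.continuousAt.inv₀ (by rw [hcn]; norm_num)
      · exact continuousAt_id
    have hlim2 : Filter.Tendsto (fun k => ‖u k‖⁻¹ • u k) Filter.atTop (𝓝 (‖c‖⁻¹ • c)) :=
      hcont.tendsto.comp hlim
    rw [hcn, inv_one, one_smul] at hlim2
    exact hcmem (hCclosed.mem_of_tendsto hlim2
      (Filter.Eventually.of_forall fun k => (hu k).2))
  obtain ⟨v, hv1, hv2⟩ :=
    ProperCone.hyperplane_separation' (⟨S.closure.toPointedCone
      (ConvexCone.Pointed.of_nonempty_of_isClosed ⟨p0, subset_closure (hmemS p0 hp0C)⟩ hclosed),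
      hclosed⟩ : ProperCone ℝ (Esp n)) hcnotin
  have hvC : ∀ x ∈ C, 0 ≤ ⟪v, x⟫ := by
    intro x hx
    rw [real_inner_comm]
    exact hv1 x (ConvexCone.mem_closure.mpr (subset_closure (hmemS x hx)))
  set e := -(⟪v, c⟫ : ℝ) with hedef
  have he : 0 < e := by
    rw [hedef]
    linarith [real_inner_comm v c]
  have hvc : ⟪v, c⟫ = -e := by rw [hedef]; ring
  have hvh : ⟪v, h⟫ = t * ⟪v, g⟫ - s * e := by
    rw [hdecomp, inner_add_right, real_inner_smul_right, real_inner_smul_right, hvc]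
    ring
  set ε := min 1 (t * s * e / (1 + (t * ⟪v, g⟫ - s * e) ^ 2)) with hεdef
  have hεpos : 0 < ε := by
    apply lt_min one_pos
    have : (0:ℝ) < 1 + (t * ⟪v, g⟫ - s * e) ^ 2 := by positivity
    positivity
  have hεle : ε ≤ t * s * e / (1 + (t * ⟪v, g⟫ - s * e) ^ 2) := min_le_right _ _
  set w := g + ε • v with hwdef
  have hwc : ⟪w, c⟫ = -(ε * e) := by
    rw [hwdef, inner_add_left, real_inner_smul_left, hgc, hvc]
    ring
  have hw0 : w ≠ 0 := by
    intro e0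
    rw [e0, inner_zero_left] at hwc
    nlinarith
  have hN : 0 < ‖w‖ := norm_pos_iff.2 hw0
  set m := ‖w‖⁻¹ • w with hmdef
  have hmn : ‖m‖ = 1 := by
    rw [hmdef, norm_smul, Real.norm_eq_abs, abs_of_nonneg (inv_nonneg.2 hN.le),
      inv_mul_cancel₀ (ne_of_gt hN)]
  have hmC : ∀ x ∈ C, 0 ≤ ⟪m, x⟫ := by
    intro x hx
    rw [hmdef, real_inner_smul_left]
    apply mul_nonneg (inv_nonneg.2 hN.le)
    rw [hwdef, inner_add_left, real_inner_smul_left]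
    have h1 := (hsub hx).1.2
    have h2 := hvC x hx
    have h3 : 0 ≤ ε * ⟪v, x⟫ := mul_nonneg hεpos.le h2
    linarith
  have hNsq : ‖w‖ ^ 2 = 1 + 2 * ε * ⟪v, g⟫ + ε ^ 2 * ‖v‖ ^ 2 := by
    rw [hwdef, norm_add_sq_real, real_inner_smul_right, norm_smul, Real.norm_eq_abs, hg,
      real_inner_comm g v]
    rw [mul_pow, sq_abs]
    ring
  have hnum : ⟪w, h⟫ = t + ε * (t * ⟪v, g⟫ - s * e) := by
    rw [hwdef, inner_add_left, real_inner_smul_left, hvh, ← htdef]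
  have hkey : ⟪w, h⟫ ^ 2 < t ^ 2 * ‖w‖ ^ 2 := by
    rw [hnum, hNsq]
    exact pert_ineq htpos hs he (sq_nonneg ‖v‖) hεpos hεle
  have hwh_lt : ⟪w, h⟫ < t * ‖w‖ := by
    apply lt_of_sq_lt_sq' _ (mul_pos htpos hN)
    calc ⟪w, h⟫ ^ 2 < t ^ 2 * ‖w‖ ^ 2 := hkey
    _ = (t * ‖w‖) ^ 2 := by ring
  have hmh : ⟪m, h⟫ < t := by
    have hexp : ⟪m, h⟫ = ⟪w, h⟫ / ‖w‖ := by
      rw [hmdef, real_inner_smul_left]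
      ring
    rw [hexp, div_lt_iff₀ hN]
    linarith
  have hm1 : m ≠ h := by
    intro e0
    rw [e0, real_inner_self_eq_norm_sq, hh] at hmh
    norm_num at hmh
    linarith
  have hm2 : m ≠ -h := by
    intro e0
    have hhx : ∀ x ∈ C, ⟪h, x⟫ = 0 := by
      intro x hx
      have h1 := hmC x hx
      rw [e0, inner_neg_left] at h1
      have h2 := (hsub hx).2.2
      linarith
    obtain ⟨y, hy1, hy2, hy3⟩ := exists_near (show ‖p0‖ = 1 from hp0u) hh
      (hhx p0 hp0C) hε0
    have hyC : y ∈ C := hball0 y hy1 hy2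
    rw [hhx y hyC] at hy3
    exact lt_irrefl 0 hy3
  have hlune : IsLune m h := ⟨hmn, hh, hm1, hm2⟩
  have hsub' : C ⊆ Lune m h := by
    intro x hx
    exact ⟨⟨hCconv.1 hx, hmC x hx⟩, (hsub hx).2⟩
  have hml : lthick m h = Real.arccos (-⟪m, h⟫) := lthick_eq hmn hh hm1 hm2
  have hmh1 : -1 ≤ ⟪m, h⟫ := by
    have := abs_real_inner_le_norm m h
    rw [hmn, hh] at this
    cases' abs_le.1 this with h1 h2
    linarith
  have harc : Real.arccos (-⟪m, h⟫) < Real.arccos (-t) :=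
    arccos_strict_anti (by linarith) (by linarith) (by linarith)
  have hfin := thick_le hlune hsub'
  rw [hml] at hfin
  rw [heq] at hlth
  linarith

private lemma inner_pos_of_thick {C : Set (Esp n)} (ht : Real.pi / 2 < thick C)
    {g h : Esp n} (hl : IsLune g h) (heq : lthick g h = thick C) : 0 < ⟪g, h⟫ := by
  have hlth : lthick g h = Real.arccos (-⟪g, h⟫) :=
    lthick_eq hl.1 hl.2.1 hl.2.2.1 hl.2.2.2
  by_contra hle
  push_neg at hle
  have h0 : Real.arccos (-⟪g, h⟫) ≤ Real.arccos 0 := arccos_anti (by linarith)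
  rw [Real.arccos_zero] at h0
  rw [heq] at hlth
  linarith

private lemma center_boundary {C : Set (Esp n)} (hC : SphBody C)
    (ht : Real.pi / 2 < thick C) {g h : Esp n} (hl : IsLune g h) (hsub : C ⊆ Lune g h)
    (heq : lthick g h = thick C) : scCenter g h ∈ sphBoundary C := by
  have hmem := center_mem hC ht hl hsub heq
  obtain ⟨hcn, hgc, hhc, hdecomp⟩ := scCenter_spec hl.1 hl.2.1 hl.2.2.1 hl.2.2.2
  refine ⟨hmem, ?_⟩
  intro hint
  obtain ⟨hcu, ε, hε, hball⟩ := hint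
  have hgc' : ⟪-g, scCenter g h⟫ = (0:ℝ) := by rw [inner_neg_left, hgc, neg_zero]
  have hgn : ‖(-g : Esp n)‖ = 1 := by rw [norm_neg]; exact hl.1
  obtain ⟨y, hy1, hy2, hy3⟩ := exists_near hcn hgn hgc' hε
  have hyC : y ∈ C := hball y hy1 hy2
  have h1 := (hsub hyC).1.2
  rw [inner_neg_left] at hy3
  linarith

private lemma center_smooth {C : Set (Esp n)} (hC : SphBody C)
    (ht : Real.pi / 2 < thick C) {g h : Esp n} (hl : IsLune g h) (hsub : C ⊆ Lune g h)
    (heq : lthick g h = thick C) : SmoothPoint C (scCenter g h) := by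
  have hg : ‖g‖ = 1 := hl.1
  have hh : ‖h‖ = 1 := hl.2.1
  have hmem := center_mem hC ht hl hsub heq
  obtain ⟨hcn, hgc, hhc, hdecomp⟩ := scCenter_spec hg hh hl.2.2.1 hl.2.2.2
  have htpos : 0 < ⟪g, h⟫ := inner_pos_of_thick ht hl heq
  have ht1 : ⟪g, h⟫ < 1 := inner_lt_one_of_ne hg hh hl.2.2.1
  have ht2 : -1 < ⟪g, h⟫ := neg_one_lt_inner hg hh hl.2.2.2
  have hs2 : 0 < 1 - ⟪g, h⟫ ^ 2 := by nlinarith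
  have hs : 0 < Real.sqrt (1 - ⟪g, h⟫ ^ 2) := Real.sqrt_pos.2 hs2
  have hlth : lthick g h = Real.arccos (-⟪g, h⟫) :=
    lthick_eq hg hh hl.2.2.1 hl.2.2.2
  refine ⟨g, ⟨hl.1, fun x hx => (hsub hx).1, hmem, hgc⟩, ?_⟩
  rintro m ⟨hmu, hmsub, _, hmc⟩
  by_contra hmg
  have hmn : ‖m‖ = 1 := hmu
  have hmh : ⟪m, h⟫ = ⟪g, h⟫ * ⟪m, g⟫ := by
    calc ⟪m, h⟫ = ⟪m, ⟪g, h⟫ • g + Real.sqrt (1 - ⟪g, h⟫ ^ 2) • scCenter g h⟫ := by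
          rw [← hdecomp]
    _ = ⟪g, h⟫ * ⟪m, g⟫ + Real.sqrt (1 - ⟪g, h⟫ ^ 2) * ⟪m, scCenter g h⟫ := by
          rw [inner_add_right, real_inner_smul_right, real_inner_smul_right]
    _ = ⟪g, h⟫ * ⟪m, g⟫ := by rw [hmc]; ring
  have hmglt : ⟪m, g⟫ < 1 := inner_lt_one_of_ne hmn hg hmg
  have hmhlt : ⟪m, h⟫ < ⟪g, h⟫ := by
    rw [hmh]
    nlinarith
  have hm1 : m ≠ h := by
    intro e0
    rw [e0] at hmc
    rw [hmc] at hhc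
    linarith
  have hm2 : m ≠ -h := by
    intro e0
    rw [e0, inner_neg_left] at hmc
    have : ⟪h, scCenter g h⟫ = 0 := by linarith
    rw [this] at hhc
    linarith
  have hlune : IsLune m h := ⟨hmn, hh, hm1, hm2⟩
  have hsub' : C ⊆ Lune m h := fun x hx => ⟨hmsub hx, (hsub hx).2⟩
  have hml : lthick m h = Real.arccos (-⟪m, h⟫) := lthick_eq hmn hh hm1 hm2
  have hmh1 : -1 ≤ ⟪m, h⟫ := by
    have h1 := abs_real_inner_le_norm m h
    rw [hmn, hh] at h1
    cases' abs_le.1 h1 with h2 h3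
    linarith
  have harc : Real.arccos (-⟪m, h⟫) < Real.arccos (-⟪g, h⟫) :=
    arccos_strict_anti (by linarith) (by linarith) (by linarith)
  have hfin := thick_le hlune hsub'
  rw [hml] at hfin
  rw [heq] at hlth
  linarith

end Aux

/-- Let C ⊂ S^d be a spherical convex body with Δ(C) > π/2 and L = G ∩ H a
lune containing C with Δ(L) = Δ(C). Then the centers of the two hemispheres
bounding L belong to the boundary of C and both are smooth points. -/
theorem stmt_16 (d : ℕ) (C : Set (Esp (d + 1))) (hC : SphBody C)
    (ht : Real.pi / 2 < thick C) (g h : Esp (d + 1)) (hl : IsLune g h)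
    (hsub : C ⊆ Lune g h) (heq : lthick g h = thick C) :
    scCenter g h ∈ sphBoundary C ∧ scCenter h g ∈ sphBoundary C ∧
    SmoothPoint C (scCenter g h) ∧ SmoothPoint C (scCenter h g) := by
  have hl' : IsLune h g := by
    refine ⟨hl.2.1, hl.1, hl.2.2.1.symm, ?_⟩
    intro e
    apply hl.2.2.2
    rw [e, neg_neg]
  have hsub' : C ⊆ Lune h g := fun x hx => ⟨(hsub hx).2, (hsub hx).1⟩
  have heq' : lthick h g = thick C := by
    have h1 := lthick_eq hl'.1 hl'.2.1 hl'.2.2.1 hl'.2.2.2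
    have h2 := lthick_eq hl.1 hl.2.1 hl.2.2.1 hl.2.2.2
    rw [h1, real_inner_comm, ← h2]
    exact heq
  exact ⟨center_boundary hC ht hl hsub heq, center_boundary hC ht hl' hsub' heq',
    center_smooth hC ht hl hsub heq, center_smooth hC ht hl' hsub' heq'⟩
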